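/- arXiv:1501.04664 — 8 statements merged into one kernel-verified Lean document; each statement's English description precedes it below -/
import Mathlib

section
/- Let A and M be abelian groups and let f₊ : A×A×A → M and g₊ : A×A → M be functions satisfying, for all a, b, c, d ∈ A: (i) f₊(b,c,d) − f₊(a+b,c,d) + f₊(a,b+c,d) − f₊(a,b,c+d) + f₊(a,b,c) = 0; (ii) f₊(a,b,c) − f₊(a,c,b) + f₊(c,a,b) = g₊(b,c) − g₊(a+b,c) + g₊(a,c); (iii) f₊(a,b,c) − f₊(b,a,c) + f₊(b,c,a) = −g₊(a,c) + g₊(a,b+c) − g₊(a,b). Then the trace q : A → M defined by q(a) := g₊(a,a) is a quadratic map: q(n·a) = n²·q(a) for all n ∈ ℤ and a ∈ A, and the associated symmetric function Δq(a,b) := q(a+b) − q(a) − q(b) is additive in each variable. -/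
/-!
Statement 4: if `(f₊, g₊)` satisfies the Eilenberg–Mac Lane cocycle equations
(i)–(iii), then the trace `q(a) = g₊(a,a)` is a quadratic map: `q(n•a) = n²•q(a)`
for all `n ∈ ℤ`, and `Δq(a,b) = q(a+b) − q(a) − q(b)` is additive in each variable.
-/

theorem trace_of_EM_cocycle_is_quadratic
    {A M : Type*} [AddCommGroup A] [AddCommGroup M]
    (f : A → A → A → M) (g : A → A → M)
    (h1 : ∀ a b c d : A,
      f b c d - f (a + b) c d + f a (b + c) d - f a b (c + d) + f a b c = 0)
    (h2 : ∀ a b c : A,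
      f a b c - f a c b + f c a b = g b c - g (a + b) c + g a c)
    (h3 : ∀ a b c : A,
      f a b c - f b a c + f b c a = -g a c + g a (b + c) - g a b) :
    (∀ (n : ℤ) (a : A), g (n • a) (n • a) = n ^ 2 • g a a) ∧
    (∀ a a' b : A,
      (g (a + a' + b) (a + a' + b) - g (a + a') (a + a') - g b b) =
        (g (a + b) (a + b) - g a a - g b b) +
          (g (a' + b) (a' + b) - g a' a' - g b b)) ∧
    (∀ a b b' : A,
      (g (a + (b + b')) (a + (b + b')) - g a a - g (b + b') (b + b')) =
        (g (a + b) (a + b) - g a a - g b b) +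
          (g (a + b') (a + b') - g a a - g b' b')) := by
  -- The key "cube" identity: the polarization of `q(x) = g x x` is biadditive.
  have cube : ∀ x y z : A,
      g (x + y + z) (x + y + z) - g (x + y) (x + y) - g (x + z) (x + z)
        - g (y + z) (y + z) + g x x + g y y + g z z = 0 := by
    intro x y z
    have e01 := h1 x y x y
    have e02 := h1 x y z (y + z)
    have e03 := h1 x y (y + z) z
    have e04 := h1 x z x z
    have e05 := h1 x (y + z) x (y + z)
    have e06 := h1 x (y + z) y z
    have e07 := h1 y x z (y + z)
    have e08 := h1 y x (y + z) z
    have e09 := h1 y z x (y + z)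
    have e10 := h3 x x y
    have e11 := h3 x x z
    have e12 := h3 x x (y + z)
    have e13 := h3 x y z
    have e14 := h2 x y (x + y)
    have e15 := h2 x z (x + z)
    have e16 := h2 x (y + z) (x + y + z)
    have e17 := h3 y x y
    have e18 := h3 y x (y + z)
    have e19 := h2 y z (y + z)
    have e20 := h2 y z (x + y + z)
    have e21 := h3 z x z
    have e22 := h3 z x (y + z)
    simp only [add_comm, add_left_comm, add_assoc] at *
    linear_combination (norm := abel1) -e01 + e02 - e03 - e04 + e05 + e06 - e07 +
      e08 + e09 + e10 + e11 - e12 - e13 - e14 - e15 + e16 + e17 - e18 - e19 +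
      e20 + e21 - e22
  -- The "square" identity: q(x + x) = 4 q(x).
  have sq : ∀ x : A,
      g (x + x) (x + x) - g x x - g x x - g x x - g x x = 0 := by
    intro x
    have e1 := h1 x x x x
    have e2 := h3 x x x
    have e3 := h2 x x (x + x)
    linear_combination (norm := abel1) e1 - e2 - e2 + e3
  -- q(0) = 0.
  have q0 : g (0 : A) (0 : A) = 0 := by
    have e := cube 0 0 0
    simp only [add_zero] at e
    linear_combination (norm := abel1) e
  refine ⟨?_, ?_, ?_⟩
  · intro n a
    have key : ∀ m : ℤ, g (m • a) (m • a) = m ^ 2 • g a a ∧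
        g (m • a + a) (m • a + a) = (m + 1) ^ 2 • g a a := by
      intro m
      induction m using Int.induction_on with
      | zero =>
        constructor
        · simpa using q0
        · simp
      | succ i ih =>
        obtain ⟨ih1, ih2⟩ := ih
        have hsm : ((i : ℤ) + 1) • a = (i : ℤ) • a + a := by
          rw [add_smul, one_smul]
        constructor
        · rw [hsm]; exact ih2
        · rw [hsm]
          have e := cube ((i : ℤ) • a) a a
          have s := sq a
          linear_combination (norm := module) e + s + ih2 + ih2 - ih1
      | pred i ih =>
        obtain ⟨ih1, ih2⟩ := ih
        have hsm : (-(i : ℤ) - 1) • a + a = (-(i : ℤ)) • a := by module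
        constructor
        · have e := cube ((-(i : ℤ) - 1) • a) a a
          rw [hsm] at e
          have s := sq a
          linear_combination (norm := module) e + s + ih1 + ih1 - ih2
        · rw [hsm]
          linear_combination (norm := module) ih1
    exact (key n).1
  · intro a a' b
    have e := cube a a' b
    linear_combination (norm := abel1) e
  · intro a b b'
    rw [add_comm a (b + b'), add_comm a b, add_comm a b']
    have e := cube b b' a
    linear_combination (norm := abel1) e
end

section
/- Let A be a ring with identity 1, M an A-bimodule, and let g₊ : A×A → M, α₁ : A×A×A → M, α₂ : A×A×A → M be functions satisfying, for all a, b, c ∈ A: g₊(ac,bc) − g₊(a,b)·c = −α₁(a,b,c) + α₁(b,a,c) and g₊(ab,ac) − a·g₊(b,c) = α₂(a,b,c) − α₂(a,c,b). Then the map q : A → M defined by q(a) := g₊(a,a) satisfies q(ac) = q(a)·c and q(ab) = a·q(b) for all a, b, c ∈ A; consequently, setting m := g₊(1,1), the element m is central in M (a·m = m·a for all a ∈ A), q(a) = a·m = m·a for all a, and q is additive, i.e. q is an A-bimodule homomorphism determined by the central element m. If moreover g₊(a,b) + g₊(b,a) = 0 for all a, b ∈ A, then 2·m = 0. -/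
/-!
Statement 5: `A` a unital ring, `M` an `A`-bimodule (left `A`-action `a • m`,
right action `m·a` realized as `MulOpposite.op a • m`).  If `g₊, α₁, α₂` satisfy
the two displayed equations (the last two equations of the cocycle block (49)),
then `q(a) := g₊(a,a)` satisfies `q(ac) = q(a)·c` and `q(ab) = a·q(b)`;
consequently `m := g₊(1,1)` is central, `q(a) = a·m = m·a`, and `q` is additive.
If moreover `g₊(a,b) + g₊(b,a) = 0` for all `a, b`, then `2·m = 0`.
-/

open MulOpposite

theorem trace_is_bimodule_hom_of_central_element
    {A M : Type*} [Ring A] [AddCommGroup M] [Module A M] [Module Aᵐᵒᵖ M]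
    [SMulCommClass A Aᵐᵒᵖ M]
    (g : A → A → M) (α₁ α₂ : A → A → A → M)
    (h1 : ∀ a b c : A, g (a * c) (b * c) - op c • g a b = -α₁ a b c + α₁ b a c)
    (h2 : ∀ a b c : A, g (a * b) (a * c) - a • g b c = α₂ a b c - α₂ a c b) :
    (∀ a c : A, g (a * c) (a * c) = op c • g a a) ∧
    (∀ a b : A, g (a * b) (a * b) = a • g b b) ∧
    (∀ a : A, a • g 1 1 = op a • g 1 1) ∧
    (∀ a : A, g a a = a • g 1 1 ∧ g a a = op a • g 1 1) ∧
    (∀ a b : A, g (a + b) (a + b) = g a a + g b b) ∧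
    ((∀ a b : A, g a b + g b a = 0) → (2 : ℤ) • g 1 1 = 0) := by
  have hq1 : ∀ a c : A, g (a * c) (a * c) = op c • g a a := by
    intro a c
    have := h1 a a c
    simp at this
    exact sub_eq_zero.mp this
  have hq2 : ∀ a b : A, g (a * b) (a * b) = a • g b b := by
    intro a b
    have := h2 a b b
    simp at this
    exact sub_eq_zero.mp this
  have hl : ∀ a : A, g a a = a • g 1 1 := fun a => by
    simpa using hq2 a 1
  have hr : ∀ a : A, g a a = op a • g 1 1 := fun a => by
    simpa using hq1 1 a
  have hc : ∀ a : A, a • g 1 1 = op a • g 1 1 := fun a => (hl a).symm.trans (hr a)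
  refine ⟨hq1, hq2, hc, fun a => ⟨hl a, hr a⟩, ?_, ?_⟩
  · intro a b
    rw [hl (a+b), hl a, hl b, add_smul]
  · intro h
    have := h 1 1
    rw [two_smul]
    exact this
end

section
/- Let A be a ring with identity 1, M an A-bimodule, and let g₊ : A×A → M, α₁ : A×A×A → M, α₂ : A×A×A → M be functions satisfying the twisted equations, for all a, b, c ∈ A: −g₊(bc,ac) − g₊(a,b)·c = −α₁(a,b,c) + α₁(b,a,c) and −g₊(ac,ab) − a·g₊(b,c) = α₂(a,b,c) − α₂(a,c,b). Then q(a) := g₊(a,a) satisfies q(ac) = −q(a)·c and q(ab) = −a·q(b) for all a, b, c ∈ A, and consequently 2·g₊(a,a) = 0 for all a ∈ A. -/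
/-!
Statement 6: `A` a unital ring, `M` an `A`-bimodule.  If `g₊, α₁, α₂` satisfy the
twisted equations (52) of the paper, then `q(a) := g₊(a,a)` satisfies
`q(ac) = −q(a)·c` and `q(ab) = −a·q(b)`, and consequently `2·g₊(a,a) = 0` for all `a`.
-/

open MulOpposite

theorem twisted_trace_two_torsion
    {A M : Type*} [Ring A] [AddCommGroup M] [Module A M] [Module Aᵐᵒᵖ M]
    [SMulCommClass A Aᵐᵒᵖ M]
    (g : A → A → M) (α₁ α₂ : A → A → A → M)
    (h1 : ∀ a b c : A, -g (b * c) (a * c) - op c • g a b = -α₁ a b c + α₁ b a c)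
    (h2 : ∀ a b c : A, -g (a * c) (a * b) - a • g b c = α₂ a b c - α₂ a c b) :
    (∀ a c : A, g (a * c) (a * c) = -(op c • g a a)) ∧
    (∀ a b : A, g (a * b) (a * b) = -(a • g b b)) ∧
    (∀ a : A, (2 : ℤ) • g a a = 0) := by
  have H1 : ∀ a c : A, g (a * c) (a * c) = -(op c • g a a) := by
    intro a c
    have h := h1 a a c
    rw [neg_add_cancel, sub_eq_zero] at h
    exact neg_eq_iff_eq_neg.mp h
  have H2 : ∀ a b : A, g (a * b) (a * b) = -(a • g b b) := by
    intro a b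
    have h := h2 a b b
    rw [sub_self, sub_eq_zero] at h
    exact neg_eq_iff_eq_neg.mp h
  refine ⟨H1, H2, fun a => ?_⟩
  have h := H1 a 1
  rw [mul_one, op_one, one_smul] at h
  rw [two_zsmul]
  nth_rewrite 1 [h]
  abel
end

section
/- Let A be a ring with identity 1 and M an A-bimodule. Suppose the functions f, α₁, α₂, f₊ : A×A×A → M and g₊ : A×A → M satisfy, for all a, b, c, d ∈ A, the twisted cocycle system: (T1) a·f(b,c,d) − f(ab,c,d) + f(a,bc,d) − f(a,b,cd) + f(a,b,c)·d = 0; (T2) f(b,c,d) − f(a+b,c,d) + f(a,c,d) = α₁(ac,bc,d) − α₁(a,b,cd) + α₁(a,b,c)·d; (T3) −f(a,c,d) + f(a,b+c,d) − f(a,b,d) = a·α₁(b,c,d) − α₁(ab,ac,d) − α₂(a,bd,cd) + α₂(a,b,c)·d; (T4) f(a,b,d) − f(a,b,c+d) + f(a,b,c) = a·α₂(b,c,d) − α₂(ab,c,d) + α₂(a,bc,bd); (T5) f₊(ac,bc,ad+bd) − f₊(ac,ad,bc+bd) + f₊(ad,bc,bd) − f₊(bc,ad,bd) − g₊(bc,ad)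 = α₁(a,b,d) − α₁(a,b,c+d) + α₁(a,b,c) + α₂(b,c,d) − α₂(a+b,c,d) + α₂(a,c,d); (T6) f₊(ad,bd,cd) − f₊(a,b,c)·d = −α₁(b,c,d) + α₁(a+b,c,d) − α₁(a,b+c,d) + α₁(a,b,d); (T7) f₊(ab,ac,ad) − a·f₊(b,c,d) = α₂(a,c,d) − α₂(a,b+c,d) + α₂(a,b,c+d) − α₂(a,b,c); (T8) −g₊(bc,ac) − g₊(a,b)·c = −α₁(a,b,c) + α₁(b,a,c); (T9) −g₊(ac,ab) − a·g₊(b,c) = α₂(a,b,c) − α₂(a,c,b); (T10) f₊(b,c,d) − f₊(a+b,c,d) + f₊(a,b+c,d) − f₊(a,b,c+d) + f₊(a,b,c) = 0; (T11) f₊(a,b,c) − f₊(a,c,b) + f₊(c,a,b) = g₊(b,c) − g₊(a+b,c) + g₊(a,c); (T12) f₊(a,b,c) − f₊(b,a,c) + f₊(b,c,a) = −g₊(a,c) + g₊(a,b+c) − g₊(a,b). Then g₊(a,b) + g₊(b,a) = 0 for all a, b ∈ A, and consequently (f, α₁, α₂, f₊, g₊) satisfies the untwisted cocycle system (in which (T8)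 and (T9) are replaced by g₊(ac,bc) − g₊(a,b)·c = −α₁(a,b,c) + α₁(b,a,c) and g₊(ab,ac) − a·g₊(b,c) = α₂(a,b,c) − α₂(a,c,b), and the antisymmetry equation g₊(a,b) + g₊(b,a) = 0 is added). -/
/-!
Statement 7: for a unital ring `A` and an `A`-bimodule `M`, any 5-tuple
`(f, α₁, α₂, fp, gp)` satisfying the twisted cocycle system (T1)–(T12)
(the condition `Dξ = δξ + β_ξ = 0` of the paper) satisfies
`gp(a,b) + gp(b,a) = 0`, and consequently satisfies the untwisted cocycle
system (in which (T8), (T9) are replaced by their untwisted forms and the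
antisymmetry equation is added).
-/

open MulOpposite

theorem twisted_cocycle_is_untwisted_of_unital
    {A M : Type*} [Ring A] [AddCommGroup M] [Module A M] [Module Aᵐᵒᵖ M]
    [SMulCommClass A Aᵐᵒᵖ M]
    (f α₁ α₂ fp : A → A → A → M) (gp : A → A → M)
    (hT1 : ∀ a b c d : A,
      a • f b c d - f (a * b) c d + f a (b * c) d - f a b (c * d)
        + op d • f a b c = 0)
    (hT2 : ∀ a b c d : A,
      f b c d - f (a + b) c d + f a c d =
        α₁ (a * c) (b * c) d - α₁ a b (c * d) + op d • α₁ a b c)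
    (hT3 : ∀ a b c d : A,
      -f a c d + f a (b + c) d - f a b d =
        a • α₁ b c d - α₁ (a * b) (a * c) d - α₂ a (b * d) (c * d)
          + op d • α₂ a b c)
    (hT4 : ∀ a b c d : A,
      f a b d - f a b (c + d) + f a b c =
        a • α₂ b c d - α₂ (a * b) c d + α₂ a (b * c) (b * d))
    (hT5 : ∀ a b c d : A,
      fp (a * c) (b * c) (a * d + b * d) - fp (a * c) (a * d) (b * c + b * d)
          + fp (a * d) (b * c) (b * d) - fp (b * c) (a * d) (b * d)
          - gp (b * c) (a * d) =
        α₁ a b d - α₁ a b (c + d) + α₁ a b c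
          + α₂ b c d - α₂ (a + b) c d + α₂ a c d)
    (hT6 : ∀ a b c d : A,
      fp (a * d) (b * d) (c * d) - op d • fp a b c =
        -α₁ b c d + α₁ (a + b) c d - α₁ a (b + c) d + α₁ a b d)
    (hT7 : ∀ a b c d : A,
      fp (a * b) (a * c) (a * d) - a • fp b c d =
        α₂ a c d - α₂ a (b + c) d + α₂ a b (c + d) - α₂ a b c)
    (hT8 : ∀ a b c : A,
      -gp (b * c) (a * c) - op c • gp a b = -α₁ a b c + α₁ b a c)
    (hT9 : ∀ a b c : A,
      -gp (a * c) (a * b) - a • gp b c = α₂ a b c - α₂ a c b)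
    (hT10 : ∀ a b c d : A,
      fp b c d - fp (a + b) c d + fp a (b + c) d - fp a b (c + d) + fp a b c = 0)
    (hT11 : ∀ a b c : A,
      fp a b c - fp a c b + fp c a b = gp b c - gp (a + b) c + gp a c)
    (hT12 : ∀ a b c : A,
      fp a b c - fp b a c + fp b c a = -gp a c + gp a (b + c) - gp a b) :
    (∀ a b : A, gp a b + gp b a = 0) ∧
    (∀ a b c : A,
      gp (a * c) (b * c) - op c • gp a b = -α₁ a b c + α₁ b a c) ∧
    (∀ a b c : A,
      gp (a * b) (a * c) - a • gp b c = α₂ a b c - α₂ a c b) := by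
  -- Step 1: α₁ (a, b, 1) is symmetric in a, b (from T2 at c = d = 1).
  have hsym : ∀ a b : A, α₁ a b 1 = α₁ b a 1 := by
    intro a b
    have h1 := hT2 a b 1 1
    have h2 := hT2 b a 1 1
    simp only [mul_one, one_mul, op_one, one_smul] at h1 h2
    rw [add_comm b a] at h2
    have e1 : f b 1 1 - f (a + b) 1 1 + f a 1 1 = α₁ a b 1 := by rw [h1]; abel
    have e2 : f a 1 1 - f (a + b) 1 1 + f b 1 1 = α₁ b a 1 := by rw [h2]; abel
    rw [← e1, ← e2]; abel
  -- Step 2: antisymmetry of gp (from T8 at c = 1).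
  have hanti : ∀ a b : A, gp a b + gp b a = 0 := by
    intro a b
    have h := hT8 a b 1
    simp only [mul_one, op_one, one_smul] at h
    rw [hsym a b] at h
    rw [show gp a b + gp b a = -(-gp b a - gp a b) by abel, h]
    abel
  refine ⟨hanti, ?_, ?_⟩
  · intro a b c
    have h := hT8 a b c
    rw [show gp (a * c) (b * c) = -gp (b * c) (a * c) from
      eq_neg_of_add_eq_zero_right (hanti (b * c) (a * c))]
    exact h
  · intro a b c
    have h := hT9 a b c
    rw [show gp (a * b) (a * c) = -gp (a * c) (a * b) from
      eq_neg_of_add_eq_zero_right (hanti (a * c) (a * b))]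
    exact h
end

section
/- Let H and K be groups and (G, Π, ∂) a crossed module. Let g₁ : H×H×K → G and x : H×K → Π be functions. For each k ∈ K define a binary operation on H×G by (h,a) ∗_k (h',a') := (hh', g₁(h,h',k) · a^{x(h',k)} · a'), and a map j_k : H×G → Π by j_k(h,a) := x(h,k)·∂(a). Then: (1) if for all h, h', h'' ∈ H and k ∈ K the cocycle identities g₁(hh',h'',k) · g₁(h,h',k)^{x(h'',k)} = g₁(h,h'h'',k) · g₁(h',h'',k) and x(h,k)·x(h',k) = x(hh',k)·∂(g₁(h,h',k)) hold, then each ∗_k is associative and each j_k is multiplicative, i.e. j_k((h,a) ∗_k (h',a')) = j_k(h,a)·j_k(h',a'); (2) conversely, if ∗_k is associative for all k then the first identity holds for all h, h', h'', k, and if j_k is multiplicative for all k then the second identity holds for all h, h', k. -/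
/-!
Statement 8: cocyclic description of a partial multiplication law of a
biextension with trivial underlying torsor.  `(G, P, ∂)` is a crossed module
(with right `P`-action on `G` written `act g x`).  Given `g₁ : H×H×K → G` and
`x : H×K → P`, for each `k ∈ K` define `(h,a) ∗_k (h',a') :=
(hh', g₁(h,h',k) · a^{x(h',k)} · a')` on `H × G` and
`j_k(h,a) := x(h,k)·∂(a)`.  Then (1) the two cocycle identities imply that each
`∗_k` is associative and each `j_k` is multiplicative, and (2) conversely,
associativity of all `∗_k` implies the first identity, and multiplicativity of
all `j_k` implies the second identity.
-/

/-- A crossed module `(G, P, ∂)`: a homomorphism `∂ : G → P` together with a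
right action of `P` on `G` by group automorphisms satisfying
`∂(g^x) = x⁻¹·∂(g)·x` and `g^{∂h} = h⁻¹gh`. -/
structure CrossedModule (G P : Type*) [Group G] [Group P] where
  /-- the homomorphism `∂ : G → P` -/
  d : G →* P
  /-- the right action `g^x` of `P` on `G` -/
  act : G → P → G
  act_one : ∀ g : G, act g 1 = g
  act_mul : ∀ (g : G) (x y : P), act g (x * y) = act (act g x) y
  act_map_mul : ∀ (g h : G) (x : P), act (g * h) x = act g x * act h x
  d_act : ∀ (g : G) (x : P), d (act g x) = x⁻¹ * d g * x
  act_d : ∀ g h : G, act g (d h) = h⁻¹ * g * h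

variable {H K G P : Type*} [Group H] [Group K] [Group G] [Group P]

/-- The partial product `(h,a) ∗_k (h',a') = (hh', g₁(h,h',k) · a^{x(h',k)} · a')`. -/
def partialMul (M : CrossedModule G P) (g₁ : H → H → K → G) (x : H → K → P)
    (k : K) (p q : H × G) : H × G :=
  (p.1 * q.1, g₁ p.1 q.1 k * M.act p.2 (x q.1 k) * q.2)

/-- The map `j_k(h,a) = x(h,k)·∂(a)`. -/
def jMap (M : CrossedModule G P) (x : H → K → P) (k : K) (p : H × G) : P :=
  x p.1 k * M.d p.2

theorem partialMul_assoc_and_jMap_mul_iff_cocycle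
    (M : CrossedModule G P) (g₁ : H → H → K → G) (x : H → K → P) :
    -- (1)
    (((∀ (h h' h'' : H) (k : K),
        g₁ (h * h') h'' k * M.act (g₁ h h' k) (x h'' k) =
          g₁ h (h' * h'') k * g₁ h' h'' k) ∧
      (∀ (h h' : H) (k : K),
        x h k * x h' k = x (h * h') k * M.d (g₁ h h' k))) →
      ((∀ (k : K) (p q r : H × G),
          partialMul M g₁ x k (partialMul M g₁ x k p q) r =
            partialMul M g₁ x k p (partialMul M g₁ x k q r)) ∧
       (∀ (k : K) (p q : H × G),
          jMap M x k (partialMul M g₁ x k p q) = jMap M x k p * jMap M x k q))) ∧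
    -- (2)
    ((∀ (k : K) (p q r : H × G),
        partialMul M g₁ x k (partialMul M g₁ x k p q) r =
          partialMul M g₁ x k p (partialMul M g₁ x k q r)) →
      ∀ (h h' h'' : H) (k : K),
        g₁ (h * h') h'' k * M.act (g₁ h h' k) (x h'' k) =
          g₁ h (h' * h'') k * g₁ h' h'' k) ∧
    ((∀ (k : K) (p q : H × G),
        jMap M x k (partialMul M g₁ x k p q) = jMap M x k p * jMap M x k q) →
      ∀ (h h' : H) (k : K),
        x h k * x h' k = x (h * h') k * M.d (g₁ h h' k)) := by
  have act1 : ∀ y : P, M.act 1 y = 1 := fun y => by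
    have h := M.act_map_mul 1 1 y
    rw [one_mul] at h
    exact right_eq_mul.mp h
  refine ⟨fun ⟨hc1, hc2⟩ => ⟨?_, ?_⟩, ?_, ?_⟩
  · rintro k ⟨h, a⟩ ⟨h', a'⟩ ⟨h'', a''⟩
    refine Prod.ext (mul_assoc _ _ _) ?_
    simp only [partialMul, M.act_map_mul, M.act_mul]
    have key : M.act a (x h' k * x h'' k) =
        (g₁ h' h'' k)⁻¹ * M.act a (x (h' * h'') k) * g₁ h' h'' k := by
      rw [hc2 h' h'' k, M.act_mul, M.act_d]
    rw [← M.act_mul] at *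
    calc g₁ (h * h') h'' k * (M.act (g₁ h h' k) (x h'' k) *
            M.act a (x h' k * x h'' k) * M.act a' (x h'' k)) * a''
        = (g₁ (h * h') h'' k * M.act (g₁ h h' k) (x h'' k)) *
            M.act a (x h' k * x h'' k) * (M.act a' (x h'' k) * a'') := by
          group
      _ = (g₁ h (h' * h'') k * g₁ h' h'' k) *
            ((g₁ h' h'' k)⁻¹ * M.act a (x (h' * h'') k) * g₁ h' h'' k) *
            (M.act a' (x h'' k) * a'') := by rw [hc1, key]
      _ = g₁ h (h' * h'') k * M.act a (x (h' * h'') k) *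
            (g₁ h' h'' k * M.act a' (x h'' k) * a'') := by group
  · rintro k ⟨h, a⟩ ⟨h', a'⟩
    simp only [jMap, partialMul, map_mul, M.d_act]
    rw [← mul_assoc, ← mul_assoc, ← hc2 h h' k]
    group
  · intro hassoc h h' h'' k
    have := congrArg Prod.snd (hassoc k (h, 1) (h', 1) (h'', 1))
    simpa [partialMul, act1] using this
  · intro hj h h' k
    have := hj k (h, 1) (h', 1)
    simp only [jMap, partialMul, act1, mul_one, map_one] at this
    exact this.symm
end

section
/- Let H and K be groups and (G, Π, ∂, ⟨-,-⟩) a braided crossed module. Let g₁ : H×H×K → G, g₂ : H×K×K → G and x : H×K → Π satisfy, for all h, h', h'' ∈ H and k, k', k'' ∈ K: g₁(hh',h'',k)·g₁(h,h',k)^{x(h'',k)} = g₁(h,h'h'',k)·g₁(h',h'',k); x(h,k)·x(h',k) = x(hh',k)·∂(g₁(h,h',k)); g₂(h,kk',k'')·g₂(h,k,k')^{x(h,k'')} = g₂(h,k,k'k'')·g₂(h,k',k''); and x(h,k)·x(h,k') = x(h,kk')·∂(g₂(h,k,k')). On E := H×K×G define the partial operations (h,k,a) ×₁ (h',k,a')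 := (hh', k, g₁(h,h',k)·a^{x(h',k)}·a') and (h,k,b) ×₂ (h,k',b') := (h, kk', g₂(h,k,k')·b^{x(h,k')}·b'), the map j(h,k,a) := x(h,k)·∂(a) ∈ Π, and the right G-action (h,k,a)·g := (h,k,ag). Then the following are equivalent: (i) for all h, h' ∈ H, k, k' ∈ K and all u ∈ {h}×{k}×G, u' ∈ {h'}×{k}×G, v ∈ {h}×{k'}×G, v' ∈ {h'}×{k'}×G, the interchange relation (u ×₁ u') ×₂ (v ×₁ v') = ((u ×₂ v) ×₁ (u' ×₂ v')) · (⟨j(u'), j(v)⟩^{j(v')})⁻¹ holds; (ii) for all h, h' ∈ H and k, k' ∈ K: g₂(hh',k,k')·g₁(h,h',k)^{x(hh',k')}·g₁(h,h',k') = g₁(h,h',kk')·g₂(h,k,k')^{x(h',kk')}·g₂(h',k,k')·(⟨x(h',k), x(h,k')⟩^{x(h',k')})⁻¹. -/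
/-!
Statement 9: cocyclic description of a biextension of `H, K` by a braided
crossed module `(G, P, ∂, ⟨-,-⟩)` with trivial underlying torsor.  Given the
nonabelian cocycle data `(g₁, g₂, x)`, the pointwise interchange relation
between the two partial multiplication laws on `E = H × K × G` is equivalent to
the cocycle interchange formula involving the braiding correction term.
-/

/-- A braided crossed module `(G, P, ∂, ⟨-,-⟩)`. -/
structure BraidedCrossedModule (G P : Type*) [Group G] [Group P] where
  /-- the homomorphism `∂ : G → P` -/
  d : G →* P
  /-- the right action `g^x` of `P` on `G` -/
  act : G → P → G
  act_one : ∀ g : G, act g 1 = g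
  act_mul : ∀ (g : G) (x y : P), act g (x * y) = act (act g x) y
  act_map_mul : ∀ (g h : G) (x : P), act (g * h) x = act g x * act h x
  d_act : ∀ (g : G) (x : P), d (act g x) = x⁻¹ * d g * x
  act_d : ∀ g h : G, act g (d h) = h⁻¹ * g * h
  /-- the braiding `⟨-,-⟩ : P × P → G` -/
  brk : P → P → G
  d_brk : ∀ x y : P, d (brk x y) = y⁻¹ * x⁻¹ * y * x
  brk_mul_right : ∀ x y z : P, brk x (y * z) = act (brk x y) z * brk x z
  brk_mul_left : ∀ x y z : P, brk (x * y) z = brk y z * act (brk x z) y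
  brk_d : ∀ (x : P) (h : G), brk x (d h) = h⁻¹ * act h x
  d_brk' : ∀ (g : G) (y : P), brk (d g) y = (act g y)⁻¹ * g

variable {H K G P : Type*} [Group H] [Group K] [Group G] [Group P]


namespace BraidedCrossedModule

variable {G P : Type*} [Group G] [Group P] (M : BraidedCrossedModule G P)

lemma act_one' (x : P) : M.act 1 x = 1 := by
  have h := M.act_map_mul 1 1 x
  rw [one_mul] at h
  exact (mul_left_cancel (a := M.act 1 x) (by rw [mul_one, ← h])).symm

lemma act_inv (g : G) (x : P) : M.act g⁻¹ x = (M.act g x)⁻¹ := by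
  refine eq_inv_of_mul_eq_one_left ?_
  rw [← M.act_map_mul, inv_mul_cancel, M.act_one']

lemma act_shift (a c : G) (u : P) :
    M.act a u * c = c * M.act a (u * M.d c) := by
  rw [M.act_mul, M.act_d]; group

lemma act_shift_inv (a c : G) (u : P) :
    M.act a u * c⁻¹ = c⁻¹ * M.act a (u * (M.d c)⁻¹) := by
  have h := M.act_shift a c⁻¹ u
  rwa [map_inv] at h

lemma interchange_aux
    (p' q q' X Y : P) (G1 G1k G1' G2 G2' G2'' : G)
    (hY : q * q' = Y * M.d G1')
    (hX : p' * q' = X * M.d G2')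
    (hii : G2'' * M.act G1k Y * G1' =
      G1 * M.act G2 X * G2' * (M.act (M.brk p' q) q')⁻¹)
    (a a' b b' : G) :
    G2'' * M.act (G1k * M.act a p' * a') Y * (G1' * M.act b q' * b') =
      G1 * M.act (G2 * M.act a q * b) X * (G2' * M.act a' q' * b') *
        (M.act (M.brk (p' * M.d a') (q * M.d b)) (q' * M.d b'))⁻¹ := by
  have hb1 : M.brk (p' * M.d a') (q * M.d b) =
      b⁻¹ * (M.act a' q)⁻¹ * M.brk p' q * M.act b p' * a' := by
    rw [M.brk_mul_left, M.d_brk', M.brk_mul_right, M.brk_d, M.act_mul]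
    simp only [M.act_d]
    group
  have r2 : M.act (M.brk (p' * M.d a') (q * M.d b)) (q' * M.d b') =
      b'⁻¹ * ((M.act b q')⁻¹ * (M.act a' (q * q'))⁻¹ *
        M.act (M.brk p' q) q' * M.act b (p' * q') * M.act a' q') * b' := by
    rw [hb1, M.act_mul, M.act_d]
    simp only [M.act_map_mul, M.act_inv, ← M.act_mul]
  have l2 : M.act a (p' * Y) * G1' = G1' * M.act a (p' * (q * q')) := by
    rw [M.act_shift, hY, mul_assoc]
  have l3 : M.act a' Y * G1' = G1' * M.act a' (q * q') := by
    rw [M.act_shift, hY]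
  have r3 : M.act a (q * X) * G2' = G2' * M.act a (q * (p' * q')) := by
    rw [M.act_shift, hX, mul_assoc]
  have r4 : M.act b X * G2' = G2' * M.act b (p' * q') := by
    rw [M.act_shift, hX]
  have hexp : q * (p' * q') * (M.d (M.act (M.brk p' q) q'))⁻¹ =
      p' * (q * q') := by
    rw [M.d_act, M.d_brk]; group
  have r5 : M.act a (q * (p' * q')) * (M.act (M.brk p' q) q')⁻¹ =
      (M.act (M.brk p' q) q')⁻¹ * M.act a (p' * (q * q')) := by
    rw [M.act_shift_inv, hexp]
  calc G2'' * M.act (G1k * M.act a p' * a') Y * (G1' * M.act b q' * b')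
      = G2'' * M.act G1k Y *
          (M.act a (p' * Y) * (M.act a' Y * G1')) * M.act b q' * b' := by
        rw [M.act_map_mul, M.act_map_mul, ← M.act_mul]; group
    _ = G2'' * M.act G1k Y * (M.act a (p' * Y) * G1') *
          M.act a' (q * q') * M.act b q' * b' := by rw [l3]; group
    _ = G2'' * M.act G1k Y * G1' * M.act a (p' * (q * q')) *
          M.act a' (q * q') * M.act b q' * b' := by rw [l2]; group
    _ = G1 * M.act G2 X * G2' * (M.act (M.brk p' q) q')⁻¹ *
          M.act a (p' * (q * q')) * M.act a' (q * q') * M.act b q' * b' := by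
        rw [hii]
    _ = G1 * M.act G2 X * G2' *
          (M.act a (q * (p' * q')) * (M.act (M.brk p' q) q')⁻¹) *
          M.act a' (q * q') * M.act b q' * b' := by rw [r5]; group
    _ = G1 * M.act G2 X * (M.act a (q * X) * G2') *
          (M.act (M.brk p' q) q')⁻¹ *
          M.act a' (q * q') * M.act b q' * b' := by rw [r3]; group
    _ = G1 * M.act G2 X * (M.act a (q * X) * (M.act b X * G2')) *
          (M.act b (p' * q'))⁻¹ * (M.act (M.brk p' q) q')⁻¹ *
          M.act a' (q * q') * M.act b q' * b' := by rw [r4]; group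
    _ = G1 * M.act (G2 * M.act a q * b) X * (G2' * M.act a' q' * b') *
          (M.act (M.brk (p' * M.d a') (q * M.d b)) (q' * M.d b'))⁻¹ := by
        rw [r2, M.act_map_mul, M.act_map_mul, ← M.act_mul]; group

end BraidedCrossedModule

theorem biextension_interchange_iff_cocycle_interchange
    (M : BraidedCrossedModule G P)
    (g₁ : H → H → K → G) (g₂ : H → K → K → G) (x : H → K → P)
    (hg₁ : ∀ (h h' h'' : H) (k : K),
      g₁ (h * h') h'' k * M.act (g₁ h h' k) (x h'' k) =
        g₁ h (h' * h'') k * g₁ h' h'' k)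
    (hx₁ : ∀ (h h' : H) (k : K),
      x h k * x h' k = x (h * h') k * M.d (g₁ h h' k))
    (hg₂ : ∀ (h : H) (k k' k'' : K),
      g₂ h (k * k') k'' * M.act (g₂ h k k') (x h k'') =
        g₂ h k (k' * k'') * g₂ h k' k'')
    (hx₂ : ∀ (h : H) (k k' : K),
      x h k * x h k' = x h (k * k') * M.d (g₂ h k k')) :
    -- (i): pointwise interchange law on `E = H × K × G`, with the right
    -- `G`-action `(h,k,a)·g = (h,k,ag)` and `j(h,k,a) = x(h,k)·∂(a)`:
    -- `(u ×₁ u') ×₂ (v ×₁ v') = ((u ×₂ v) ×₁ (u' ×₂ v')) · (⟨j u', j v⟩^{j v'})⁻¹`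
    (∀ (h h' : H) (k k' : K) (a a' b b' : G),
      ((h * h', k * k',
        g₂ (h * h') k k'
          * M.act (g₁ h h' k * M.act a (x h' k) * a') (x (h * h') k')
          * (g₁ h h' k' * M.act b (x h' k') * b')) : H × K × G) =
      ((h * h', k * k',
        (g₁ h h' (k * k')
            * M.act (g₂ h k k' * M.act a (x h k') * b) (x h' (k * k'))
            * (g₂ h' k k' * M.act a' (x h' k') * b'))
          * (M.act (M.brk (x h' k * M.d a') (x h k' * M.d b))
              (x h' k' * M.d b'))⁻¹) : H × K × G))
    ↔
    -- (ii): the cocycle interchange formula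
    (∀ (h h' : H) (k k' : K),
      g₂ (h * h') k k' * M.act (g₁ h h' k) (x (h * h') k') * g₁ h h' k' =
        g₁ h h' (k * k') * M.act (g₂ h k k') (x h' (k * k')) * g₂ h' k k'
          * (M.act (M.brk (x h' k) (x h k')) (x h' k'))⁻¹) := by
  constructor
  · intro hi h h' k k'
    have h3 := congrArg (fun t : H × K × G => t.2.2) (hi h h' k k' 1 1 1 1)
    simpa [M.act_one', map_one] using h3
  · intro hii h h' k k' a a' b b'
    have h3 := M.interchange_aux (x h' k) (x h k') (x h' k')
      (x h' (k * k')) (x (h * h') k')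
      (g₁ h h' (k * k')) (g₁ h h' k) (g₁ h h' k')
      (g₂ h k k') (g₂ h' k k') (g₂ (h * h') k k')
      (hx₁ h h' k') (hx₂ h' k k') (hii h h' k k') a a' b b'
    simp only [Prod.mk.injEq]
    exact ⟨trivial, trivial, h3⟩
end

section
/- Let C, D, C', D' be monoidal categories and E a braided monoidal category. Let F : C × D ⥤ E be a functor equipped with natural morphisms λ¹_{x,x',y} : F(x,y) ⊗ F(x',y) → F(x⊗x', y) and λ²_{x,y,y'} : F(x,y) ⊗ F(x,y') → F(x, y⊗y') satisfying the bimonoidal compatibility condition. Let G : C' ⥤ C and H : D' ⥤ D be lax monoidal functors with structure morphisms μ_{u,u'} : G(u)⊗G(u') → G(u⊗u') and ν_{v,v'} : H(v)⊗H(v') → H(v⊗v'). Then the composite functor F∘(G×H) : C'×D' ⥤ E, equipped with the structure morphisms λ̃¹_{u,u',v} := λ¹_{G(u),G(u'),H(v)} ≫ F(μ_{u,u'} , 1_{H(v)}) and λ̃²_{u,v,v'} := λ²_{G(u),H(v),H(v')} ≫ F(1_{G(u)}, ν_{v,v'}), again satisfies the bimonoidal compatibility condition. -/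
/-!
Statement 10: if `F : C × D ⥤ E` (with `E` braided) is equipped with natural
morphisms `λ¹, λ²` satisfying the bimonoidal compatibility condition, and
`G : C' ⥤ C`, `H : D' ⥤ D` are lax monoidal functors, then the composite
`F ∘ (G × H)`, equipped with the structure morphisms
`λ̃¹ = λ¹ ≫ F(μ, 1)` and `λ̃² = λ² ≫ F(1, ν)`, again satisfies the bimonoidal
compatibility condition.
-/

open CategoryTheory MonoidalCategory CategoryTheory.Functor.LaxMonoidal

section

variable {C D E : Type*} [Category C] [Category D] [Category E]
  [MonoidalCategory C] [MonoidalCategory D] [MonoidalCategory E] [BraidedCategory E]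

/-- The braided middle-four interchange
`ĉ_{P,Q,R,S} : (P⊗Q)⊗(R⊗S) ⟶ (P⊗R)⊗(Q⊗S)`. -/
def braidedInterchange (P Q R S : E) : (P ⊗ Q) ⊗ (R ⊗ S) ⟶ (P ⊗ R) ⊗ (Q ⊗ S) :=
  (α_ P Q (R ⊗ S)).hom ≫
    (P ◁ ((α_ Q R S).inv ≫ ((β_ Q R).hom ▷ S) ≫ (α_ R Q S).hom)) ≫
      (α_ P R (Q ⊗ S)).inv

/-- The bimonoidal compatibility condition for a bifunctor `F : C × D ⥤ E`
equipped with partial monoidal structure morphisms `λ¹, λ²`: for all objects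
`x, x'` of `C` and `y, y'` of `D`,
`ĉ ≫ (λ²_{x,y,y'} ⊗ λ²_{x',y,y'}) ≫ λ¹_{x,x',y⊗y'}
  = (λ¹_{x,x',y} ⊗ λ¹_{x,x',y'}) ≫ λ²_{x⊗x',y,y'}`. -/
def BimonoidalCompat (F : C × D ⥤ E)
    (l1 : ∀ (x x' : C) (y : D), F.obj (x, y) ⊗ F.obj (x', y) ⟶ F.obj (x ⊗ x', y))
    (l2 : ∀ (x : C) (y y' : D), F.obj (x, y) ⊗ F.obj (x, y') ⟶ F.obj (x, y ⊗ y')) :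
    Prop :=
  ∀ (x x' : C) (y y' : D),
    braidedInterchange (F.obj (x, y)) (F.obj (x', y)) (F.obj (x, y')) (F.obj (x', y')) ≫
        (l2 x y y' ⊗ₘ l2 x' y y') ≫ l1 x x' (y ⊗ y') =
      (l1 x x' y ⊗ₘ l1 x x' y') ≫ l2 (x ⊗ x') y y'

end

theorem bimonoidalCompat_comp_laxMonoidal
    {C D C' D' E : Type*} [Category C] [Category D] [Category C'] [Category D']
    [Category E] [MonoidalCategory C] [MonoidalCategory D] [MonoidalCategory C']
    [MonoidalCategory D'] [MonoidalCategory E] [BraidedCategory E]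
    (F : C × D ⥤ E)
    (l1 : ∀ (x x' : C) (y : D), F.obj (x, y) ⊗ F.obj (x', y) ⟶ F.obj (x ⊗ x', y))
    (l2 : ∀ (x : C) (y y' : D), F.obj (x, y) ⊗ F.obj (x, y') ⟶ F.obj (x, y ⊗ y'))
    -- naturality of `λ¹` in each variable
    (hl1nat : ∀ {x x₁ x' x₁' : C} {y y₁ : D} (f : x ⟶ x₁) (f' : x' ⟶ x₁') (g : y ⟶ y₁),
      (F.map ((f, g) : (x, y) ⟶ (x₁, y₁)) ⊗ₘ F.map ((f', g) : (x', y) ⟶ (x₁', y₁))) ≫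
          l1 x₁ x₁' y₁ =
        l1 x x' y ≫ F.map ((f ⊗ₘ f', g) : (x ⊗ x', y) ⟶ (x₁ ⊗ x₁', y₁)))
    -- naturality of `λ²` in each variable
    (hl2nat : ∀ {x x₁ : C} {y y₁ y' y₁' : D} (f : x ⟶ x₁) (g : y ⟶ y₁) (g' : y' ⟶ y₁'),
      (F.map ((f, g) : (x, y) ⟶ (x₁, y₁)) ⊗ₘ F.map ((f, g') : (x, y') ⟶ (x₁, y₁'))) ≫
          l2 x₁ y₁ y₁' =
        l2 x y y' ≫ F.map ((f, g ⊗ₘ g') : (x, y ⊗ y') ⟶ (x₁, y₁ ⊗ y₁')))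
    (hF : BimonoidalCompat F l1 l2)
    (G : C' ⥤ C) [G.LaxMonoidal] (H : D' ⥤ D) [H.LaxMonoidal] :
    BimonoidalCompat (G.prod H ⋙ F)
      (fun u u' v =>
        l1 (G.obj u) (G.obj u') (H.obj v) ≫
          F.map ((μ G u u', 𝟙 (H.obj v)) :
            ((G.obj u ⊗ G.obj u', H.obj v) : C × D) ⟶ (G.obj (u ⊗ u'), H.obj v)))
      (fun u v v' =>
        l2 (G.obj u) (H.obj v) (H.obj v') ≫
          F.map ((𝟙 (G.obj u), μ H v v') :
            ((G.obj u, H.obj v ⊗ H.obj v') : C × D) ⟶ (G.obj u, H.obj (v ⊗ v')))) := by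
  intro u u' v v'
  have h1 := hl1nat (𝟙 (G.obj u)) (𝟙 (G.obj u')) (μ H v v')
  have h2 := hl2nat (μ G u u') (𝟙 (H.obj v)) (𝟙 (H.obj v'))
  have hc := hF (G.obj u) (G.obj u') (H.obj v) (H.obj v')
  simp only [Functor.comp_obj, Functor.prod_obj]
  rw [← tensorHom_comp_tensorHom, ← tensorHom_comp_tensorHom, Category.assoc, Category.assoc]
  slice_lhs 3 4 => rw [h1]
  slice_rhs 2 3 => rw [h2]
  slice_lhs 1 3 => rw [hc]
  simp only [Category.assoc, ← F.map_comp, prod_Hom, Prod.mk.injEq, prod_comp,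
    id_tensorHom_id, Category.id_comp, Category.comp_id]
end

section
/- Let D and E be braided monoidal categories and F : D ⥤ E a braided lax monoidal functor, with structure morphisms μ_{d,d'} : F(d)⊗F(d') → F(d⊗d') satisfying the lax monoidal coherence with the associators and the braided compatibility μ_{d,d'} ≫ F(β_{d,d'}) = β_{F(d),F(d')} ≫ μ_{d',d}. Let C₁ and C₂ be monoidal categories and G : C₁ × C₂ ⥤ D a functor equipped with natural morphisms λ¹, λ² satisfying the bimonoidal compatibility condition in D. Then the composite F∘G : C₁×C₂ ⥤ E, equipped with the structure morphisms μ_{G(x,y),G(x',y)} ≫ F(λ¹_{x,x',y}) and μ_{G(x,y),G(x,y')} ≫ F(λ²_{x,y,y'}), satisfies the bimonoidal compatibility condition in E. -/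
/-!
Statement 11: if `F : D ⥤ E` is a braided lax monoidal functor between braided
monoidal categories (structure morphisms `μ` satisfying the lax monoidal
coherences and `μ ≫ F(β) = β ≫ μ`), and `G : C₁ × C₂ ⥤ D` is equipped with
natural morphisms `λ¹, λ²` satisfying the bimonoidal compatibility condition
in `D`, then `F ∘ G`, equipped with the structure morphisms `μ ≫ F(λ¹)` and
`μ ≫ F(λ²)`, satisfies the bimonoidal compatibility condition in `E`.
-/

open CategoryTheory MonoidalCategory CategoryTheory.Functor.LaxMonoidal

section
variable {E : Type*} [Category E] [MonoidalCategory E] [BraidedCategory E]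

lemma braidedInterchange_eq_tensorμ (P Q R S : E) :
    braidedInterchange P Q R S = tensorμ P Q R S := by
  simp [braidedInterchange, tensorμ, MonoidalCategory.whiskerLeft_comp]

lemma key_laxBraided_tensorμ {D : Type*} [Category D] [MonoidalCategory D]
    [BraidedCategory D] (F : D ⥤ E) [F.LaxBraided] (P Q R S : D) :
    tensorμ (F.obj P) (F.obj Q) (F.obj R) (F.obj S) ≫ (μ F P R ⊗ₘ μ F Q S) ≫ μ F (P ⊗ R) (Q ⊗ S) =
      (μ F P Q ⊗ₘ μ F R S) ≫ μ F (P ⊗ Q) (R ⊗ S) ≫ F.map (tensorμ P Q R S) := by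
  have h1 : F.obj P ◁ (F.obj Q ◁ μ F R S) ≫ F.obj P ◁ μ F Q (R ⊗ S) ≫
      F.obj P ◁ F.map (α_ Q R S).inv =
      F.obj P ◁ (α_ (F.obj Q) (F.obj R) (F.obj S)).inv ≫
        F.obj P ◁ (μ F Q R ▷ F.obj S) ≫ F.obj P ◁ μ F (Q ⊗ R) S := by
    simp only [← MonoidalCategory.whiskerLeft_comp]; rw [associativity_inv]
  have h2 : F.obj P ◁ μ F (Q ⊗ R) S ≫ F.obj P ◁ F.map ((β_ Q R).hom ▷ S) =
      F.obj P ◁ (F.map (β_ Q R).hom ▷ F.obj S) ≫ F.obj P ◁ μ F (R ⊗ Q) S := by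
    simp only [← MonoidalCategory.whiskerLeft_comp]; rw [μ_natural_left]
  have h3 : F.obj P ◁ (μ F Q R ▷ F.obj S) ≫ F.obj P ◁ (F.map (β_ Q R).hom ▷ F.obj S) =
      F.obj P ◁ ((β_ (F.obj Q) (F.obj R)).hom ▷ F.obj S) ≫
        F.obj P ◁ (μ F R Q ▷ F.obj S) := by
    simp only [← MonoidalCategory.whiskerLeft_comp, ← comp_whiskerRight]
    rw [Functor.LaxBraided.braided]
  have h4 : F.obj P ◁ (μ F R Q ▷ F.obj S) ≫ F.obj P ◁ μ F (R ⊗ Q) S ≫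
      F.obj P ◁ F.map (α_ R Q S).hom =
      F.obj P ◁ (α_ (F.obj R) (F.obj Q) (F.obj S)).hom ≫
        F.obj P ◁ (F.obj R ◁ μ F Q S) ≫ F.obj P ◁ μ F R (Q ⊗ S) := by
    simp only [← MonoidalCategory.whiskerLeft_comp]; rw [associativity]
  dsimp only [tensorμ]
  simp only [Functor.map_comp, Category.assoc]
  slice_rhs 1 1 => rw [tensorHom_def']
  slice_rhs 2 4 => rw [associativity]
  slice_rhs 1 2 => rw [associator_naturality_right]
  slice_rhs 4 5 => rw [← μ_natural_right]
  slice_rhs 5 6 => rw [← μ_natural_right]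
  slice_rhs 6 7 => rw [← μ_natural_right]
  slice_rhs 2 4 => rw [h1]
  slice_rhs 4 5 => rw [h2]
  slice_rhs 3 4 => rw [h3]
  slice_rhs 4 6 => rw [h4]
  slice_rhs 6 8 => rw [associativity_inv]
  slice_rhs 5 6 => rw [associator_inv_naturality_right]
  slice_lhs 6 6 => rw [tensorHom_def']
  simp only [Category.assoc]

end

theorem bimonoidalCompat_comp_laxBraided
    {C₁ C₂ D E : Type*} [Category C₁] [Category C₂] [Category D] [Category E]
    [MonoidalCategory C₁] [MonoidalCategory C₂] [MonoidalCategory D]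
    [MonoidalCategory E] [BraidedCategory D] [BraidedCategory E]
    (F : D ⥤ E) [F.LaxBraided]
    (G : C₁ × C₂ ⥤ D)
    (l1 : ∀ (x x' : C₁) (y : C₂), G.obj (x, y) ⊗ G.obj (x', y) ⟶ G.obj (x ⊗ x', y))
    (l2 : ∀ (x : C₁) (y y' : C₂), G.obj (x, y) ⊗ G.obj (x, y') ⟶ G.obj (x, y ⊗ y'))
    -- naturality of `λ¹` in each variable
    (hl1nat : ∀ {x x₁ x' x₁' : C₁} {y y₁ : C₂} (f : x ⟶ x₁) (f' : x' ⟶ x₁') (g : y ⟶ y₁),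
      (G.map ((f, g) : (x, y) ⟶ (x₁, y₁)) ⊗ₘ G.map ((f', g) : (x', y) ⟶ (x₁', y₁))) ≫
          l1 x₁ x₁' y₁ =
        l1 x x' y ≫ G.map ((f ⊗ₘ f', g) : (x ⊗ x', y) ⟶ (x₁ ⊗ x₁', y₁)))
    -- naturality of `λ²` in each variable
    (hl2nat : ∀ {x x₁ : C₁} {y y₁ y' y₁' : C₂} (f : x ⟶ x₁) (g : y ⟶ y₁) (g' : y' ⟶ y₁'),
      (G.map ((f, g) : (x, y) ⟶ (x₁, y₁)) ⊗ₘ G.map ((f, g') : (x, y') ⟶ (x₁, y₁'))) ≫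
          l2 x₁ y₁ y₁' =
        l2 x y y' ≫ G.map ((f, g ⊗ₘ g') : (x, y ⊗ y') ⟶ (x₁, y₁ ⊗ y₁')))
    (hG : BimonoidalCompat G l1 l2) :
    BimonoidalCompat (G ⋙ F)
      (fun x x' y => μ F (G.obj (x, y)) (G.obj (x', y)) ≫ F.map (l1 x x' y))
      (fun x y y' => μ F (G.obj (x, y)) (G.obj (x, y')) ≫ F.map (l2 x y y')) := by
  intro x x' y y'
  dsimp only [Functor.comp_obj]
  rw [braidedInterchange_eq_tensorμ]
  simp only [← tensorHom_comp_tensorHom, Category.assoc, μ_natural_assoc]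
  rw [reassoc_of% (key_laxBraided_tensorμ F (G.obj (x, y)) (G.obj (x', y)) (G.obj (x, y'))
    (G.obj (x', y')))]
  rw [← Functor.map_comp, ← Functor.map_comp, ← braidedInterchange_eq_tensorμ, hG x x' y y',
    Functor.map_comp]
end
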